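/- For every real number γ > 0 there exist real numbers ε > 0 and η > 0 such that for every b ∈ [−ε, (1−ε)/2], writing L_b for the line {(t, γ(t−b)) : t ∈ ℝ}, the one-dimensional Lebesgue measure of {t ∈ ℝ : (t, γ(t−b)) ∈ E₁} is at least η times the one-dimensional Lebesgue measure of {t ∈ ℝ : (t, γ(t−b)) ∈ E}. -/

import Mathlib

open MeasureTheory

/-- The open triangle with given vertices: the interior of their convex hull. -/
def triInterior (a b c : ℝ × ℝ) : Set (ℝ × ℝ) :=
  interior (convexHull ℝ {a, b, c})

/-- The closed triangle `E` with vertices `(0,0)`, `(1,0)`, `(0,1)`. -/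
def E : Set (ℝ × ℝ) := {p : ℝ × ℝ | 0 ≤ p.1 ∧ 0 ≤ p.2 ∧ p.1 + p.2 ≤ 1}

/-- `E₁`: the interior of the triangle with vertices `(0,1/2)`, `(1/2,0)`, `(1/2,1/2)`. -/
def E1 : Set (ℝ × ℝ) := triInterior (0, 1 / 2) (1 / 2, 0) (1 / 2, 1 / 2)

lemma T_sub_hull : {p : ℝ × ℝ | p.1 < 1/2 ∧ p.2 < 1/2 ∧ 1/2 < p.1 + p.2}
    ⊆ convexHull ℝ {((0 : ℝ), (1/2 : ℝ)), ((1/2 : ℝ), (0 : ℝ)), ((1/2 : ℝ), (1/2 : ℝ))} := by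
  rintro ⟨x, y⟩ ⟨hx, hy, hxy⟩
  set H := convexHull ℝ ({((0:ℝ), (1/2:ℝ)), ((1/2:ℝ), (0:ℝ)), ((1/2:ℝ), (1/2:ℝ))} : Set (ℝ × ℝ)) with hHdef
  have hH : Convex ℝ H := convex_convexHull ℝ _
  have ha : ((0:ℝ), (1/2:ℝ)) ∈ H := subset_convexHull ℝ _ (by simp)
  have hb : ((1/2:ℝ), (0:ℝ)) ∈ H := subset_convexHull ℝ _ (by simp)
  have hc : ((1/2:ℝ), (1/2:ℝ)) ∈ H := subset_convexHull ℝ _ (by simp)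
  have hw2 : (0:ℝ) ≤ 1 - 2*y := by linarith
  have hw3 : (0:ℝ) ≤ 2*x + 2*y - 1 := by linarith
  have hs : (0:ℝ) < 2*x := by linarith
  have hq : ((1 - 2*y)/(2*x)) • ((1/2:ℝ), (0:ℝ)) + ((2*x + 2*y - 1)/(2*x)) • ((1/2:ℝ), (1/2:ℝ)) ∈ H :=
    hH hb hc (div_nonneg hw2 hs.le) (div_nonneg hw3 hs.le) (by rw [← add_div, div_eq_one_iff_eq hs.ne']; ring)
  have hmem : (1 - 2*x) • ((0:ℝ), (1/2:ℝ)) + (2*x) •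
      (((1 - 2*y)/(2*x)) • ((1/2:ℝ), (0:ℝ)) + ((2*x + 2*y - 1)/(2*x)) • ((1/2:ℝ), (1/2:ℝ))) ∈ H :=
    hH ha hq (by linarith) hs.le (by ring)
  have heq : (1 - 2*x) • ((0:ℝ), (1/2:ℝ)) + (2*x) •
      (((1 - 2*y)/(2*x)) • ((1/2:ℝ), (0:ℝ)) + ((2*x + 2*y - 1)/(2*x)) • ((1/2:ℝ), (1/2:ℝ))) = (x, y) := by
    have h2x : (2*x) ≠ 0 := ne_of_gt hs
    simp only [Prod.smul_mk, Prod.mk_add_mk, smul_eq_mul, Prod.mk.injEq]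
    have hx0 : x ≠ 0 := ne_of_gt (by linarith)
    constructor <;> field_simp [hx0] <;> ring
  rwa [heq] at hmem

lemma T_sub_E1 : {p : ℝ × ℝ | p.1 < 1/2 ∧ p.2 < 1/2 ∧ 1/2 < p.1 + p.2} ⊆ E1 := by
  have hopen : IsOpen {p : ℝ × ℝ | p.1 < 1/2 ∧ p.2 < 1/2 ∧ 1/2 < p.1 + p.2} := by
    have : {p : ℝ × ℝ | p.1 < 1/2 ∧ p.2 < 1/2 ∧ 1/2 < p.1 + p.2}
        = {p : ℝ × ℝ | p.1 < 1/2} ∩ ({p : ℝ × ℝ | p.2 < 1/2} ∩ {p : ℝ × ℝ | 1/2 < p.1 + p.2}) := rfl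
    rw [this]
    exact (isOpen_lt continuous_fst continuous_const).inter
      ((isOpen_lt continuous_snd continuous_const).inter
        (isOpen_lt continuous_const (continuous_fst.add continuous_snd)))
  rw [E1, triInterior]
  rw [hopen.subset_interior_iff]
  exact T_sub_hull

theorem stmt0 (γ : ℝ) (hγ : 0 < γ) :
    ∃ ε > (0 : ℝ), ∃ η > (0 : ℝ), ∀ b ∈ Set.Icc (-ε) ((1 - ε) / 2),
      ENNReal.ofReal η * volume {t : ℝ | (t, γ * (t - b)) ∈ E} ≤
        volume {t : ℝ | (t, γ * (t - b)) ∈ E1} := by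
  set ε : ℝ := min (1/4) (1/(4*γ)) with hεdef
  have hεpos : 0 < ε := lt_min (by norm_num) (by positivity)
  have hε1 : ε ≤ 1/4 := min_le_left _ _
  have hε2 : ε ≤ 1/(4*γ) := min_le_right _ _
  set η : ℝ := min (γ*ε/2) (1/(4*γ)) / (1+γ) with hηdef
  have hηpos : 0 < η := by
    apply div_pos (lt_min (by positivity) (by positivity)) (by linarith)
  refine ⟨ε, hεpos, η, hηpos, fun b hb => ?_⟩
  obtain ⟨hb1, hb2⟩ := hb
  -- the E part is contained in [0,1]
  have hEsub : {t : ℝ | (t, γ * (t - b)) ∈ E} ⊆ Set.Icc (0:ℝ) 1 := by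
    intro t ht
    simp only [E, Set.mem_setOf_eq] at ht
    obtain ⟨h1, h2, h3⟩ := ht
    exact ⟨h1, by linarith⟩
  -- the E1 part contains an interval
  set l : ℝ := (1/2 + γ*b)/(1+γ) with hldef
  set r : ℝ := min (1/2) (b + 1/(2*γ)) with hrdef
  have h1γ : (0:ℝ) < 1 + γ := by linarith
  have hE1sub : Set.Ioo l r ⊆ {t : ℝ | (t, γ * (t - b)) ∈ E1} := by
    intro t ht
    obtain ⟨htl, htr⟩ := ht
    apply T_sub_E1
    have hr1 : t < 1/2 := lt_of_lt_of_le htr (min_le_left _ _)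
    have hr2 : t < b + 1/(2*γ) := lt_of_lt_of_le htr (min_le_right _ _)
    refine ⟨hr1, ?_, ?_⟩
    · show γ * (t - b) < 1/2
      have := mul_lt_mul_of_pos_left (show t - b < 1/(2*γ) by linarith) hγ
      calc γ * (t - b) < γ * (1/(2*γ)) := this
        _ = 1/2 := by field_simp
    · show 1/2 < t + γ * (t - b)
      have : (1/2 + γ*b)/(1+γ) * (1+γ) < t * (1+γ) := by
        exact mul_lt_mul_of_pos_right htl h1γ
      rw [div_mul_cancel₀ _ (ne_of_gt h1γ)] at this
      nlinarith
  -- lower bound on r - l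
  have hl1 : l * (1+γ) = 1/2 + γ*b := div_mul_cancel₀ _ (ne_of_gt h1γ)
  have hrl : η ≤ r - l := by
    have hcase1 : η ≤ 1/2 - l := by
      rw [hηdef, div_le_iff₀ h1γ]
      have h1 : min (γ*ε/2) (1/(4*γ)) ≤ γ*ε/2 := min_le_left _ _
      have h2 : γ*ε/2 ≤ γ*(1/2 - b) := by nlinarith
      nlinarith [hl1]
    have hcase2 : η ≤ (b + 1/(2*γ)) - l := by
      rw [hηdef, div_le_iff₀ h1γ]
      have h2 : min (γ*ε/2) (1/(4*γ)) ≤ 1/(4*γ) := min_le_right _ _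
      have hγc : γ * (1/(2*γ)) = 1/2 := by field_simp
      have hq : 1/(4*γ) + 1/(4*γ) = 1/(2*γ) := by field_simp; ring
      nlinarith [hl1, hε2, hb1]
    rcases le_total (1/2 : ℝ) (b + 1/(2*γ)) with h | h
    · have : r = 1/2 := min_eq_left h
      rw [this]; linarith [hcase1]
    · have : r = b + 1/(2*γ) := min_eq_right h
      rw [this]; linarith [hcase2]
  -- put everything together
  calc ENNReal.ofReal η * volume {t : ℝ | (t, γ * (t - b)) ∈ E}
      ≤ ENNReal.ofReal η * volume (Set.Icc (0:ℝ) 1) := by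
        exact mul_le_mul_right (measure_mono hEsub) _
    _ = ENNReal.ofReal η := by
        rw [Real.volume_Icc]; norm_num
    _ ≤ ENNReal.ofReal (r - l) := ENNReal.ofReal_le_ofReal hrl
    _ = volume (Set.Ioo l r) := by rw [Real.volume_Ioo]
    _ ≤ volume {t : ℝ | (t, γ * (t - b)) ∈ E1} := measure_mono hE1sub
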